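/- Let X be a topological space and let U_1, …, U_n ⊆ X be sets that are either all open or all closed. Let σ, τ ⊆ {1,…,n}, let p_σ be a point of the atom A_σ and p_τ a point of the atom A_τ, and suppose there is a continuous path γ : [0,1] → X with γ(0) = p_σ, γ(1) = p_τ, and γ([0,1]) ⊆ A_σ ∪ A_τ. Then σ ⊆ τ or τ ⊆ σ. -/

import Mathlib

/-- The atom of a subset `σ` of neurons with respect to a family of sets `U`:
`A_σ = (⋂_{i ∈ σ} U_i) \ (⋃_{j ∉ σ} U_j)`. -/
def atomOf {n : ℕ} {X : Type*} (U : Fin n → Set X) (σ : Set (Fin n)) : Set X :=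
  (⋂ i ∈ σ, U i) \ (⋃ j ∈ σᶜ, U j)

lemma mem_atom_mem {n : ℕ} {X : Type*} {U : Fin n → Set X} {σ : Set (Fin n)} {x : X}
    (hx : x ∈ atomOf U σ) {i : Fin n} (hi : i ∈ σ) : x ∈ U i := by
  have := hx.1
  simp only [Set.mem_iInter] at this
  exact this i hi

lemma mem_atom_not_mem {n : ℕ} {X : Type*} {U : Fin n → Set X} {σ : Set (Fin n)} {x : X}
    (hx : x ∈ atomOf U σ) {j : Fin n} (hj : j ∉ σ) : x ∉ U j := by
  intro h
  exact hx.2 (Set.mem_biUnion hj h)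

theorem stmt0 {X : Type*} [TopologicalSpace X] {n : ℕ} (U : Fin n → Set X)
    (hU : (∀ i, IsOpen (U i)) ∨ (∀ i, IsClosed (U i)))
    (σ τ : Set (Fin n)) (pσ pτ : X)
    (hpσ : pσ ∈ atomOf U σ) (hpτ : pτ ∈ atomOf U τ)
    (γ : ℝ → X) (hγ : ContinuousOn γ (Set.Icc 0 1))
    (h0 : γ 0 = pσ) (h1 : γ 1 = pτ)
    (hrange : ∀ t ∈ Set.Icc (0:ℝ) 1, γ t ∈ atomOf U σ ∪ atomOf U τ) :
    σ ⊆ τ ∨ τ ⊆ σ := by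
  by_contra hc
  push_neg at hc
  obtain ⟨hστ, hτσ⟩ := hc
  obtain ⟨i, hiσ, hiτ⟩ := Set.not_subset.mp hστ
  obtain ⟨j, hjτ, hjσ⟩ := Set.not_subset.mp hτσ
  set s : Set ℝ := Set.Icc 0 1 with hs
  haveI : PreconnectedSpace s := Subtype.preconnectedSpace isPreconnected_Icc
  set f : s → X := s.restrict γ with hf
  have hfc : Continuous f := hγ.restrict
  have key : ∀ x ∈ atomOf U σ ∪ atomOf U τ, (x ∈ U i ∧ x ∉ U j) ∨ (x ∈ U j ∧ x ∉ U i) := by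
    rintro x (hx | hx)
    · exact Or.inl ⟨mem_atom_mem hx hiσ, mem_atom_not_mem hx hjσ⟩
    · exact Or.inr ⟨mem_atom_mem hx hjτ, mem_atom_not_mem hx hiτ⟩
  set A : Set s := f ⁻¹' (U i) with hA
  have hcompl : Aᶜ = f ⁻¹' (U j) := by
    ext t
    have := key (γ t) (hrange t t.2)
    simp only [hA, Set.mem_compl_iff, Set.mem_preimage, hf, Set.restrict_apply]
    tauto
  have hclopen : IsClopen A := by
    rcases hU with hU | hU
    · refine ⟨?_, (hU i).preimage hfc⟩
      rw [← isOpen_compl_iff, hcompl]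
      exact (hU j).preimage hfc
    · refine ⟨(hU i).preimage hfc, ?_⟩
      rw [← isClosed_compl_iff, hcompl]
      exact (hU j).preimage hfc
  have h0s : (0:ℝ) ∈ s := by constructor <;> norm_num
  have h1s : (1:ℝ) ∈ s := by constructor <;> norm_num
  have h0A : (⟨0, h0s⟩ : s) ∈ A := by
    simp only [hA, Set.mem_preimage, hf, Set.restrict_apply, h0]
    have := mem_atom_mem hpσ hiσ; rw [← h0] at this; exact this
  have h1A : (⟨1, h1s⟩ : s) ∈ Aᶜ := by
    rw [hcompl]
    simp only [Set.mem_preimage, hf, Set.restrict_apply, h1]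
    have := mem_atom_mem hpτ hjτ; rw [← h1] at this; exact this
  rcases isClopen_iff.mp hclopen with h | h
  · rw [h] at h0A; exact h0A
  · rw [h] at h1A; exact h1A (Set.mem_univ _)
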